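/- Let K be a compact metrizable abelian group with Haar probability measure m, G a countable abelian group, ρ : G → K a homomorphism with dense image, and f̃_1,…,f̃_d : K → [0,1] measurable. Suppose each f̃_i is within ε/2^d in L²(m)-norm of a trigonometric polynomial with values in [0,1]. Then the function φ : G → ℝ, φ(t) := ∫_{K^d} f̃_d(k + ρ(t) − Σ_{j<d} c_j s_j) ∏_{j<d} f̃_j(k + c_d s_j) dk ds_1 ⋯ ds_{d−1}, is within ε (in sup norm on G) of a trigonometric polynomial on G; in particular φ is uniformly almost periodic on G. -/

import Mathlib

open MeasureTheory

/-- A trigonometric polynomial on a topological abelian group: a finite linear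
combination of continuous characters (homomorphisms into the circle). -/
def IsTrigPolyCont {K : Type*} [AddCommGroup K] [TopologicalSpace K] (p : K → ℂ) : Prop :=
  ∃ (d : ℕ) (a : Fin d → ℂ) (χ : Fin d → AddChar K ℂ),
    (∀ i, Continuous (χ i)) ∧ (∀ i x, ‖χ i x‖ = 1) ∧ ∀ x, p x = ∑ i, a i * χ i x

/-- A trigonometric polynomial on a discrete abelian group `G`. -/
def IsTrigPoly {G : Type*} [AddCommGroup G] (p : G → ℂ) : Prop :=
  ∃ (d : ℕ) (a : Fin d → ℂ) (χ : Fin d → AddChar G ℂ),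
    (∀ i x, ‖χ i x‖ = 1) ∧ ∀ x, p x = ∑ i, a i * χ i x

private lemma my_integrable_of_bound {α E : Type*} [MeasurableSpace α] [NormedAddCommGroup E]
    (μ : Measure α) [IsFiniteMeasure μ] {g : α → E} (hg : AEStronglyMeasurable g μ) (C : ℝ)
    (h : ∀ x, ‖g x‖ ≤ C) : Integrable g μ :=
  ⟨hg, HasFiniteIntegral.of_bounded (ae_of_all _ h)⟩

private lemma my_norm_le_one {z : ℂ} (h0 : z.im = 0) (h1 : z.re ∈ Set.Icc (0:ℝ) 1) : ‖z‖ ≤ 1 := by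
  have : z = (z.re : ℂ) := Complex.ext rfl (by simp [h0])
  rw [this, Complex.norm_real, Real.norm_eq_abs, abs_of_nonneg h1.1]
  exact h1.2

private lemma my_prod_sub_prod {ι : Type*} (s : Finset ι) (g h : ι → ℂ)
    (hg : ∀ i ∈ s, ‖g i‖ ≤ 1) (hh : ∀ i ∈ s, ‖h i‖ ≤ 1) :
    ‖(∏ i ∈ s, g i) - ∏ i ∈ s, h i‖ ≤ ∑ i ∈ s, ‖g i - h i‖ := by
  classical
  induction s using Finset.cons_induction with
  | empty => simp
  | cons a s ha ih =>
    rw [Finset.prod_cons, Finset.prod_cons, Finset.sum_cons]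
    have hga : ‖g a‖ ≤ 1 := hg a (Finset.mem_cons_self a s)
    have hB : ‖∏ i ∈ s, h i‖ ≤ 1 := by
      rw [norm_prod]
      exact Finset.prod_le_one (fun i _ => norm_nonneg _) (fun i hi => hh i (Finset.mem_cons_of_mem hi))
    have key : g a * ∏ i ∈ s, g i - h a * ∏ i ∈ s, h i
        = g a * ((∏ i ∈ s, g i) - ∏ i ∈ s, h i) + (g a - h a) * ∏ i ∈ s, h i := by ring
    rw [key]
    calc ‖g a * ((∏ i ∈ s, g i) - ∏ i ∈ s, h i) + (g a - h a) * ∏ i ∈ s, h i‖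
        ≤ ‖g a‖ * ‖(∏ i ∈ s, g i) - ∏ i ∈ s, h i‖ + ‖g a - h a‖ * ‖∏ i ∈ s, h i‖ := by
          refine le_trans (norm_add_le _ _) ?_
          rw [norm_mul, norm_mul]
      _ ≤ 1 * (∑ i ∈ s, ‖g i - h i‖) + ‖g a - h a‖ * 1 := by
          have := ih (fun i hi => hg i (Finset.mem_cons_of_mem hi))
            (fun i hi => hh i (Finset.mem_cons_of_mem hi))
          gcongr
      _ = ‖g a - h a‖ + ∑ i ∈ s, ‖g i - h i‖ := by ring

/-- with `n = d - 1`; `f j` (`j : Fin n`) play the role of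
`f̃_1, …, f̃_{d-1}`, `fd` of `f̃_d`, `c j` of `c_1, …, c_{d-1}` and `cd` of `c_d`,
and `d = n + 1`. -/
theorem stmt13 {K : Type*} [AddCommGroup K] [TopologicalSpace K] [IsTopologicalAddGroup K]
    [CompactSpace K] [TopologicalSpace.MetrizableSpace K] [MeasurableSpace K] [BorelSpace K]
    (m : Measure K) [m.IsAddHaarMeasure] [IsProbabilityMeasure m]
    {G : Type*} [AddCommGroup G] [Countable G]
    (ρ : G →+ K) (hρ : DenseRange ρ)
    (n : ℕ) (f : Fin n → K → ℝ) (fd : K → ℝ)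
    (hf : ∀ j, Measurable (f j)) (hfd : Measurable fd)
    (hf01 : ∀ j x, f j x ∈ Set.Icc (0 : ℝ) 1) (hfd01 : ∀ x, fd x ∈ Set.Icc (0 : ℝ) 1)
    (c : Fin n → ℤ) (cd : ℤ) (ε : ℝ) (hε : 0 < ε)
    (happrox : ∀ j : Fin n, ∃ p : K → ℂ, IsTrigPolyCont p ∧
      (∀ x, (p x).im = 0 ∧ (p x).re ∈ Set.Icc (0 : ℝ) 1) ∧
      eLpNorm (fun x => (f j x : ℂ) - p x) 2 m ≤ ENNReal.ofReal (ε / 2 ^ (n + 1)))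
    (happroxd : ∃ p : K → ℂ, IsTrigPolyCont p ∧
      (∀ x, (p x).im = 0 ∧ (p x).re ∈ Set.Icc (0 : ℝ) 1) ∧
      eLpNorm (fun x => (fd x : ℂ) - p x) 2 m ≤ ENNReal.ofReal (ε / 2 ^ (n + 1)))
    (φ : G → ℝ)
    (hφ : ∀ t : G, φ t = ∫ s : Fin n → K,
      (∫ k, fd (k + ρ t - ∑ j, c j • s j) * ∏ j, f j (k + cd • s j) ∂m)
        ∂(Measure.pi fun _ => m)) :
    ∃ P : G → ℂ, IsTrigPoly P ∧ ∀ t, ‖(φ t : ℂ) - P t‖ ≤ ε := by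
  classical
  obtain ⟨p, ⟨N, a, χ, hχc, hχ1, hp⟩, hp01, hpL2⟩ := happroxd
  choose q hqt hq01 hqL2 using happrox
  set ν : Measure (Fin n → K) := Measure.pi fun _ => m with hν
  have hνprob : IsProbabilityMeasure ν := by rw [hν]; infer_instance
  -- continuity of the trig polynomials
  have hpc : Continuous p := by
    have : p = fun x => ∑ i, a i * χ i x := funext hp
    rw [this]; exact continuous_finset_sum _ fun i _ => continuous_const.mul (hχc i)
  have hqc : ∀ j, Continuous (q j) := by
    intro j
    obtain ⟨M, b, ψ, hψc, _, hq⟩ := hqt j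
    have : q j = fun x => ∑ i, b i * ψ i x := funext hq
    rw [this]; exact continuous_finset_sum _ fun i _ => continuous_const.mul (hψc i)
  -- norm bounds
  have hpb : ∀ x, ‖p x‖ ≤ 1 := fun x => my_norm_le_one (hp01 x).1 (hp01 x).2
  have hqb : ∀ j x, ‖q j x‖ ≤ 1 := fun j x => my_norm_le_one (hq01 j x).1 (hq01 j x).2
  have hfdb : ∀ x, ‖((fd x : ℝ) : ℂ)‖ ≤ 1 := by
    intro x
    rw [Complex.norm_real, Real.norm_eq_abs, abs_of_nonneg (hfd01 x).1]
    exact (hfd01 x).2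
  have hfb : ∀ j x, ‖((f j x : ℝ) : ℂ)‖ ≤ 1 := by
    intro j x
    rw [Complex.norm_real, Real.norm_eq_abs, abs_of_nonneg (hf01 j x).1]
    exact (hf01 j x).2
  set u : (Fin n → K) → K := fun s => ∑ j, c j • s j with hu
  have huc : Continuous u :=
    continuous_finset_sum _ fun j _ => (continuous_zsmul (c j)).comp (continuous_apply j)
  set δ : ℝ := ε / 2 ^ (n + 1) with hδ
  have hδ0 : 0 ≤ δ := le_of_lt (div_pos hε (by positivity))
  -- L¹ bounds from L² bounds
  have hL1 : ∀ g : K → ℂ, Integrable g m → eLpNorm g 2 m ≤ ENNReal.ofReal δ →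
      ∫ k, ‖g k‖ ∂m ≤ δ := by
    intro g hint h2
    have h1 : eLpNorm g 1 m ≤ ENNReal.ofReal δ :=
      le_trans (eLpNorm_le_eLpNorm_of_exponent_le (by norm_num) hint.1) h2
    rw [eLpNorm_one_eq_lintegral_enorm, ← ofReal_integral_norm_eq_lintegral_enorm hint] at h1
    exact (ENNReal.ofReal_le_ofReal_iff hδ0).mp h1
  -- integrability of the error functions
  have hgd_int : Integrable (fun k => ((fd k : ℝ) : ℂ) - p k) m := by
    refine my_integrable_of_bound m ?_ 2 ?_
    · exact ((Complex.measurable_ofReal.comp hfd).sub hpc.measurable).aestronglyMeasurable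
    · intro x
      calc ‖((fd x : ℝ) : ℂ) - p x‖ ≤ ‖((fd x : ℝ) : ℂ)‖ + ‖p x‖ := norm_sub_le _ _
        _ ≤ 1 + 1 := add_le_add (hfdb x) (hpb x)
        _ = 2 := by norm_num
  have hgj_int : ∀ j, Integrable (fun k => ((f j k : ℝ) : ℂ) - q j k) m := by
    intro j
    refine my_integrable_of_bound m ?_ 2 ?_
    · exact ((Complex.measurable_ofReal.comp (hf j)).sub (hqc j).measurable).aestronglyMeasurable
    · intro x
      calc ‖((f j x : ℝ) : ℂ) - q j x‖ ≤ ‖((f j x : ℝ) : ℂ)‖ + ‖q j x‖ := norm_sub_le _ _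
        _ ≤ 1 + 1 := add_le_add (hfb j x) (hqb j x)
        _ = 2 := by norm_num
  have herrd : ∫ k, ‖((fd k : ℝ) : ℂ) - p k‖ ∂m ≤ δ := hL1 _ hgd_int hpL2
  have herrj : ∀ j, ∫ k, ‖((f j k : ℝ) : ℂ) - q j k‖ ∂m ≤ δ := fun j => hL1 _ (hgj_int j) (hqL2 j)
  -- the coefficients of the approximating trig polynomial
  set C : Fin N → ℂ := fun i =>
    ∫ s, (∫ k, χ i (k - ∑ j, c j • s j) * ∏ j, q j (k + cd • s j) ∂m) ∂ν with hC
  refine ⟨fun t => ∑ i, (a i * C i) * χ i (ρ t),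
    ⟨N, fun i => a i * C i, fun i => (χ i).compAddMonoidHom ρ,
      fun i x => hχ1 i (ρ x), fun t => rfl⟩, ?_⟩
  intro t
  set x : K := ρ t with hx
  haveI : IsProbabilityMeasure ν := hνprob
  -- integrability of inner integrands (trig-poly version)
  have hint_inner_q : ∀ (i : Fin N) (s : Fin n → K),
      Integrable (fun k => χ i (k - ∑ j, c j • s j) * ∏ j, q j (k + cd • s j)) m := by
    intro i s
    refine my_integrable_of_bound m ?_ 1 ?_
    · refine (((hχc i).comp ((continuous_id.sub continuous_const))).mul
        (continuous_finset_prod _ fun j _ => (hqc j).comp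
          (continuous_id.add continuous_const))).measurable.aestronglyMeasurable
    · intro k
      rw [norm_mul, hχ1, one_mul, norm_prod]
      exact Finset.prod_le_one (fun j _ => norm_nonneg _) (fun j _ => hqb j _)
  -- inner expansion of p
  have hG_inner_eq : ∀ s : Fin n → K,
      ∫ k, p (k + x - ∑ j, c j • s j) * ∏ j, q j (k + cd • s j) ∂m
      = ∑ i, (a i * χ i x) * ∫ k, χ i (k - ∑ j, c j • s j) * ∏ j, q j (k + cd • s j) ∂m := by
    intro s
    have h1 : ∀ k, p (k + x - ∑ j, c j • s j) * ∏ j, q j (k + cd • s j)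
        = ∑ i, (a i * χ i x) * (χ i (k - ∑ j, c j • s j) * ∏ j, q j (k + cd • s j)) := by
      intro k
      rw [hp, Finset.sum_mul]
      refine Finset.sum_congr rfl fun i _ => ?_
      have h2 : (k + x - ∑ j, c j • s j) = x + (k - ∑ j, c j • s j) := by abel
      rw [h2, AddChar.map_add_eq_mul]
      ring
    simp_rw [h1]
    rw [integral_finset_sum _ (fun i _ => (hint_inner_q i s).const_mul _)]
    exact Finset.sum_congr rfl fun i _ => integral_const_mul _ _
  -- measurability/integrability of the outer (trig-poly) integrand
  have hGouter_int : ∀ i : Fin N,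
      Integrable (fun s => ∫ k, χ i (k - ∑ j, c j • s j) * ∏ j, q j (k + cd • s j) ∂m) ν := by
    intro i
    have hcont : Continuous fun sk : (Fin n → K) × K =>
        χ i (sk.2 - ∑ j, c j • sk.1 j) * ∏ j, q j (sk.2 + cd • sk.1 j) := by
      refine (((hχc i).comp (continuous_snd.sub (huc.comp continuous_fst)))).mul ?_
      refine continuous_finset_prod _ fun j _ => (hqc j).comp ?_
      exact continuous_snd.add ((continuous_zsmul cd).comp ((continuous_apply j).comp continuous_fst))
    refine my_integrable_of_bound ν
      hcont.stronglyMeasurable.integral_prod_right'.aestronglyMeasurable 1 ?_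
    intro s
    calc ‖∫ k, χ i (k - ∑ j, c j • s j) * ∏ j, q j (k + cd • s j) ∂m‖
        ≤ ∫ k, ‖χ i (k - ∑ j, c j • s j) * ∏ j, q j (k + cd • s j)‖ ∂m :=
          norm_integral_le_integral_norm _
      _ ≤ ∫ _, (1:ℝ) ∂m := by
          refine integral_mono (hint_inner_q i s).norm (integrable_const 1) fun k => ?_
          rw [norm_mul, hχ1, one_mul, norm_prod]
          exact Finset.prod_le_one (fun j _ => norm_nonneg _) (fun j _ => hqb j _)
      _ = 1 := by simp
  -- the key algebraic identity
  have hPsi : ∫ s, (∫ k, p (k + x - ∑ j, c j • s j) * ∏ j, q j (k + cd • s j) ∂m) ∂ν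
      = ∑ i, (a i * C i) * χ i x := by
    simp_rw [hG_inner_eq]
    rw [integral_finset_sum _ (fun i _ => (hGouter_int i).const_mul _)]
    refine Finset.sum_congr rfl fun i _ => ?_
    rw [integral_const_mul, hC]
    ring
  -- complex version of φ
  have hφC : (φ t : ℂ)
      = ∫ s, (∫ k, ((fd (k + x - ∑ j, c j • s j) : ℝ) : ℂ)
          * ∏ j, ((f j (k + cd • s j) : ℝ) : ℂ) ∂m) ∂ν := by
    rw [hφ t, ← hx]
    have inner : ∀ s : Fin n → K,
        ((∫ k, fd (k + x - ∑ j, c j • s j) * ∏ j, f j (k + cd • s j) ∂m : ℝ) : ℂ)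
        = ∫ k, ((fd (k + x - ∑ j, c j • s j) : ℝ) : ℂ)
            * ∏ j, ((f j (k + cd • s j) : ℝ) : ℂ) ∂m := by
      intro s
      have h1 : ((∫ k, fd (k + x - ∑ j, c j • s j) * ∏ j, f j (k + cd • s j) ∂m : ℝ) : ℂ)
          = ∫ k, ((fd (k + x - ∑ j, c j • s j) * ∏ j, f j (k + cd • s j) : ℝ) : ℂ) ∂m :=
        (integral_ofReal (𝕜 := ℂ)).symm
      rw [h1]
      refine integral_congr_ae (ae_of_all _ fun k => ?_)
      push_cast
      ring
    have houter : ((∫ s, (∫ k, fd (k + x - ∑ j, c j • s j)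
          * ∏ j, f j (k + cd • s j) ∂m) ∂ν : ℝ) : ℂ)
        = ∫ s, ((∫ k, fd (k + x - ∑ j, c j • s j) * ∏ j, f j (k + cd • s j) ∂m : ℝ) : ℂ) ∂ν :=
      (integral_ofReal (𝕜 := ℂ)).symm
    rw [houter]
    exact integral_congr_ae (ae_of_all _ fun s => inner s)
  -- integrability of the inner integrands
  have hFk_int : ∀ s : Fin n → K, Integrable (fun k =>
      ((fd (k + x - ∑ j, c j • s j) : ℝ) : ℂ) * ∏ j, ((f j (k + cd • s j) : ℝ) : ℂ)) m := by
    intro s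
    refine my_integrable_of_bound m ?_ 1 ?_
    · refine Measurable.aestronglyMeasurable (Measurable.mul ?_ ?_)
      · exact Complex.measurable_ofReal.comp (hfd.comp
          ((continuous_id.add continuous_const).sub continuous_const).measurable)
      · refine Finset.measurable_prod _ fun j _ => ?_
        exact Complex.measurable_ofReal.comp ((hf j).comp
          (continuous_id.add continuous_const).measurable)
    · intro k
      rw [norm_mul, norm_prod]
      refine mul_le_one₀ (hfdb _) (Finset.prod_nonneg fun j _ => norm_nonneg _) ?_
      exact Finset.prod_le_one (fun j _ => norm_nonneg _) (fun j _ => hfb j _)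
  have hGk_int : ∀ s : Fin n → K, Integrable (fun k =>
      p (k + x - ∑ j, c j • s j) * ∏ j, q j (k + cd • s j)) m := by
    intro s
    refine my_integrable_of_bound m ?_ 1 ?_
    · exact ((hpc.comp ((continuous_id.add continuous_const).sub continuous_const)).mul
        (continuous_finset_prod _ fun j _ => (hqc j).comp
          (continuous_id.add continuous_const))).measurable.aestronglyMeasurable
    · intro k
      rw [norm_mul, norm_prod]
      refine mul_le_one₀ (hpb _) (Finset.prod_nonneg fun j _ => norm_nonneg _) ?_
      exact Finset.prod_le_one (fun j _ => norm_nonneg _) (fun j _ => hqb j _)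
  -- integrability of the outer integrands
  have hFc_int : Integrable (fun s => ∫ k, ((fd (k + x - ∑ j, c j • s j) : ℝ) : ℂ)
      * ∏ j, ((f j (k + cd • s j) : ℝ) : ℂ) ∂m) ν := by
    have hjm : Measurable fun sk : (Fin n → K) × K =>
        ((fd (sk.2 + x - ∑ j, c j • sk.1 j) : ℝ) : ℂ)
          * ∏ j, ((f j (sk.2 + cd • sk.1 j) : ℝ) : ℂ) := by
      refine Measurable.mul ?_ ?_
      · exact Complex.measurable_ofReal.comp (hfd.comp
          ((continuous_snd.add continuous_const).sub (huc.comp continuous_fst)).measurable)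
      · refine Finset.measurable_prod _ fun j _ => ?_
        refine Complex.measurable_ofReal.comp ((hf j).comp ?_)
        exact (continuous_snd.add
          ((continuous_zsmul cd).comp ((continuous_apply j).comp continuous_fst))).measurable
    refine my_integrable_of_bound ν
      hjm.stronglyMeasurable.integral_prod_right'.aestronglyMeasurable 1 ?_
    intro s
    calc ‖∫ k, ((fd (k + x - ∑ j, c j • s j) : ℝ) : ℂ)
          * ∏ j, ((f j (k + cd • s j) : ℝ) : ℂ) ∂m‖
        ≤ ∫ k, ‖((fd (k + x - ∑ j, c j • s j) : ℝ) : ℂ)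
          * ∏ j, ((f j (k + cd • s j) : ℝ) : ℂ)‖ ∂m := norm_integral_le_integral_norm _
      _ ≤ ∫ _, (1:ℝ) ∂m := by
          refine integral_mono (hFk_int s).norm (integrable_const 1) fun k => ?_
          rw [norm_mul, norm_prod]
          refine mul_le_one₀ (hfdb _) (Finset.prod_nonneg fun j _ => norm_nonneg _) ?_
          exact Finset.prod_le_one (fun j _ => norm_nonneg _) (fun j _ => hfb j _)
      _ = 1 := by simp
  have hGc_int : Integrable (fun s => ∫ k, p (k + x - ∑ j, c j • s j)
      * ∏ j, q j (k + cd • s j) ∂m) ν := by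
    have hcont : Continuous fun sk : (Fin n → K) × K =>
        p (sk.2 + x - ∑ j, c j • sk.1 j) * ∏ j, q j (sk.2 + cd • sk.1 j) := by
      refine (hpc.comp ((continuous_snd.add continuous_const).sub (huc.comp continuous_fst))).mul ?_
      refine continuous_finset_prod _ fun j _ => (hqc j).comp ?_
      exact continuous_snd.add ((continuous_zsmul cd).comp ((continuous_apply j).comp continuous_fst))
    refine my_integrable_of_bound ν
      hcont.stronglyMeasurable.integral_prod_right'.aestronglyMeasurable 1 ?_
    intro s
    calc ‖∫ k, p (k + x - ∑ j, c j • s j) * ∏ j, q j (k + cd • s j) ∂m‖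
        ≤ ∫ k, ‖p (k + x - ∑ j, c j • s j) * ∏ j, q j (k + cd • s j)‖ ∂m :=
          norm_integral_le_integral_norm _
      _ ≤ ∫ _, (1:ℝ) ∂m := by
          refine integral_mono (hGk_int s).norm (integrable_const 1) fun k => ?_
          rw [norm_mul, norm_prod]
          refine mul_le_one₀ (hpb _) (Finset.prod_nonneg fun j _ => norm_nonneg _) ?_
          exact Finset.prod_le_one (fun j _ => norm_nonneg _) (fun j _ => hqb j _)
      _ = 1 := by simp
  -- pointwise bound on the difference of the inner integrals
  have hinner_bound : ∀ s : Fin n → K,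
      ‖(∫ k, ((fd (k + x - ∑ j, c j • s j) : ℝ) : ℂ)
          * ∏ j, ((f j (k + cd • s j) : ℝ) : ℂ) ∂m)
        - ∫ k, p (k + x - ∑ j, c j • s j) * ∏ j, q j (k + cd • s j) ∂m‖ ≤ δ + n * δ := by
    intro s
    rw [← integral_sub (hFk_int s) (hGk_int s)]
    have hptw : ∀ k : K, ‖(((fd (k + x - ∑ j, c j • s j) : ℝ) : ℂ)
          * ∏ j, ((f j (k + cd • s j) : ℝ) : ℂ))
        - p (k + x - ∑ j, c j • s j) * ∏ j, q j (k + cd • s j)‖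
        ≤ ‖((fd (k + x - ∑ j, c j • s j) : ℝ) : ℂ) - p (k + x - ∑ j, c j • s j)‖
          + ∑ j, ‖((f j (k + cd • s j) : ℝ) : ℂ) - q j (k + cd • s j)‖ := by
      intro k
      set A := ((fd (k + x - ∑ j, c j • s j) : ℝ) : ℂ) with hA
      set B := p (k + x - ∑ j, c j • s j) with hB
      set PA := ∏ j, ((f j (k + cd • s j) : ℝ) : ℂ) with hPA
      set PB := ∏ j, q j (k + cd • s j) with hPB
      have key : A * PA - B * PB = (A - B) * PA + B * (PA - PB) := by ring
      rw [key]
      have h1 : ‖(A - B) * PA‖ ≤ ‖A - B‖ := by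
        rw [norm_mul]
        refine mul_le_of_le_one_right (norm_nonneg _) ?_
        rw [hPA, norm_prod]
        exact Finset.prod_le_one (fun j _ => norm_nonneg _) (fun j _ => hfb j _)
      have h2 : ‖B * (PA - PB)‖ ≤ ∑ j, ‖((f j (k + cd • s j) : ℝ) : ℂ) - q j (k + cd • s j)‖ := by
        rw [norm_mul]
        refine le_trans (mul_le_of_le_one_left (norm_nonneg _) (hpb _)) ?_
        exact my_prod_sub_prod Finset.univ _ _ (fun j _ => hfb j _) (fun j _ => hqb j _)
      exact le_trans (norm_add_le _ _) (add_le_add h1 h2)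
    calc ‖∫ k, (((fd (k + x - ∑ j, c j • s j) : ℝ) : ℂ)
            * ∏ j, ((f j (k + cd • s j) : ℝ) : ℂ))
          - p (k + x - ∑ j, c j • s j) * ∏ j, q j (k + cd • s j) ∂m‖
        ≤ ∫ k, ‖(((fd (k + x - ∑ j, c j • s j) : ℝ) : ℂ)
            * ∏ j, ((f j (k + cd • s j) : ℝ) : ℂ))
          - p (k + x - ∑ j, c j • s j) * ∏ j, q j (k + cd • s j)‖ ∂m :=
          norm_integral_le_integral_norm _
      _ ≤ ∫ k, (‖((fd (k + x - ∑ j, c j • s j) : ℝ) : ℂ) - p (k + x - ∑ j, c j • s j)‖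
          + ∑ j, ‖((f j (k + cd • s j) : ℝ) : ℂ) - q j (k + cd • s j)‖) ∂m := by
          refine integral_mono ((hFk_int s).sub (hGk_int s)).norm ?_ hptw
          refine Integrable.add ?_ ?_
          · have h3 : Integrable (fun k => ((fd k : ℝ) : ℂ) - p k) m := hgd_int
            have h4 := (h3.comp_add_right (x - ∑ j, c j • s j)).norm
            refine h4.congr (ae_of_all _ fun k => ?_)
            simp [add_sub_assoc]
          · refine integrable_finset_sum _ fun j _ => ?_
            exact ((hgj_int j).comp_add_right (cd • s j)).norm
      _ = (∫ k, ‖((fd (k + x - ∑ j, c j • s j) : ℝ) : ℂ) - p (k + x - ∑ j, c j • s j)‖ ∂m)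
          + ∑ j, ∫ k, ‖((f j (k + cd • s j) : ℝ) : ℂ) - q j (k + cd • s j)‖ ∂m := by
          rw [integral_add]
          · congr 1
            exact integral_finset_sum _ fun j _ => ((hgj_int j).comp_add_right (cd • s j)).norm
          · have h4 := (hgd_int.comp_add_right (x - ∑ j, c j • s j)).norm
            refine h4.congr (ae_of_all _ fun k => ?_)
            simp [add_sub_assoc]
          · exact integrable_finset_sum _ fun j _ => ((hgj_int j).comp_add_right (cd • s j)).norm
      _ ≤ δ + n * δ := by
          refine add_le_add ?_ ?_
          · have h5 : (∫ k, ‖((fd (k + x - ∑ j, c j • s j) : ℝ) : ℂ)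
                - p (k + x - ∑ j, c j • s j)‖ ∂m)
                = ∫ k, ‖((fd k : ℝ) : ℂ) - p k‖ ∂m := by
              have h6 := integral_add_right_eq_self (μ := m)
                (fun k => ‖((fd k : ℝ) : ℂ) - p k‖) (x - ∑ j, c j • s j)
              refine Eq.trans ?_ h6
              refine integral_congr_ae (ae_of_all _ fun k => ?_)
              simp [add_sub_assoc]
            rw [h5]; exact herrd
          · calc (∑ j, ∫ k, ‖((f j (k + cd • s j) : ℝ) : ℂ) - q j (k + cd • s j)‖ ∂m)
                ≤ ∑ _j : Fin n, δ := by
                  refine Finset.sum_le_sum fun j _ => ?_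
                  have h6 := integral_add_right_eq_self (μ := m)
                    (fun k => ‖((f j k : ℝ) : ℂ) - q j k‖) (cd • s j)
                  calc (∫ k, ‖((f j (k + cd • s j) : ℝ) : ℂ) - q j (k + cd • s j)‖ ∂m)
                      = ∫ k, ‖((f j k : ℝ) : ℂ) - q j k‖ ∂m := h6
                    _ ≤ δ := herrj j
              _ = n * δ := by simp [mul_comm]
  -- putting everything together
  have hbound : ‖(φ t : ℂ) - ∑ i, (a i * C i) * χ i x‖ ≤ δ + n * δ := by
    rw [hφC, ← hPsi, ← integral_sub hFc_int hGc_int]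
    calc ‖∫ s, ((∫ k, ((fd (k + x - ∑ j, c j • s j) : ℝ) : ℂ)
            * ∏ j, ((f j (k + cd • s j) : ℝ) : ℂ) ∂m)
          - ∫ k, p (k + x - ∑ j, c j • s j) * ∏ j, q j (k + cd • s j) ∂m) ∂ν‖
        ≤ ∫ s, ‖(∫ k, ((fd (k + x - ∑ j, c j • s j) : ℝ) : ℂ)
            * ∏ j, ((f j (k + cd • s j) : ℝ) : ℂ) ∂m)
          - ∫ k, p (k + x - ∑ j, c j • s j) * ∏ j, q j (k + cd • s j) ∂m‖ ∂ν :=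
          norm_integral_le_integral_norm _
      _ ≤ ∫ _, (δ + n * δ) ∂ν := by
          refine integral_mono ((hFc_int.sub hGc_int)).norm (integrable_const _) hinner_bound
      _ = δ + n * δ := by simp
  refine le_trans hbound ?_
  have hn2 : ((n : ℝ) + 1) ≤ 2 ^ (n + 1) := by
    have := (Nat.lt_two_pow_self (n := n + 1)).le
    exact_mod_cast this
  have : δ + n * δ = ((n : ℝ) + 1) * (ε / 2 ^ (n + 1)) := by rw [hδ]; ring
  rw [this]
  calc ((n : ℝ) + 1) * (ε / 2 ^ (n + 1)) ≤ 2 ^ (n + 1) * (ε / 2 ^ (n + 1)) := by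
        refine mul_le_mul_of_nonneg_right hn2 ?_
        positivity
    _ = ε := by field_simp
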